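/- Let d1, d2 be positive real numbers, c a real number, and set t = d1*d2/(d1 + 4*d2). Consider the 3×3 real matrix H (the bordered Hessian of the scalar curvature at the Kähler–Einstein point (x1, x2) = (1, 2)) with rows: (0, -d1*2^d2, -d2*2^(d2-1)); (-d1*2^d2, d1 - 3*t - c*d1*(d1-1)*2^d2, t/2 - c*d1*d2*2^(d2-1)); (-d2*2^(d2-1), t/2 - c*d1*d2*2^(d2-1), (d2 - t)/8 - c*d2*(d2-1)*2^(d2-2)), where powers with real exponents are real powers of 2. Then det H = -(d1 + d2)*d1*d2*2^(2*d2-2)*(d2/(d1 + 4*d2) + c*2^d2); in particular, if c > 0 then det H < 0. -/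

import Mathlib

/-- Computation (11): the determinant of the bordered Hessian at the
Kähler–Einstein point (x1, x2) = (1, 2), and its negativity for c > 0. -/
theorem bordered_hessian_kahler_einstein
    (d1 d2 c : ℝ) (hd1 : 0 < d1) (hd2 : 0 < d2)
    (t : ℝ) (ht : t = d1 * d2 / (d1 + 4 * d2))
    (H : Matrix (Fin 3) (Fin 3) ℝ)
    (hH : H = !![0, -d1 * (2 : ℝ) ^ d2, -d2 * (2 : ℝ) ^ (d2 - 1);
      -d1 * (2 : ℝ) ^ d2, d1 - 3 * t - c * d1 * (d1 - 1) * (2 : ℝ) ^ d2,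
        t / 2 - c * d1 * d2 * (2 : ℝ) ^ (d2 - 1);
      -d2 * (2 : ℝ) ^ (d2 - 1), t / 2 - c * d1 * d2 * (2 : ℝ) ^ (d2 - 1),
        (d2 - t) / 8 - c * d2 * (d2 - 1) * (2 : ℝ) ^ (d2 - 2)]) :
    H.det = -(d1 + d2) * d1 * d2 * (2 : ℝ) ^ (2 * d2 - 2)
        * (d2 / (d1 + 4 * d2) + c * (2 : ℝ) ^ d2)
      ∧ (0 < c → H.det < 0) := by
  have h2 : (0:ℝ) < 2 := by norm_num
  set a : ℝ := (2 : ℝ) ^ d2 with ha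
  have hapos : 0 < a := Real.rpow_pos_of_pos h2 d2
  have h1 : (2 : ℝ) ^ (d2 - 1) = a / 2 := by
    rw [Real.rpow_sub h2, Real.rpow_one]
  have h2' : (2 : ℝ) ^ (d2 - 2) = a / 4 := by
    rw [Real.rpow_sub h2]
    norm_num
    rfl
  have h3 : (2 : ℝ) ^ (2 * d2 - 2) = a * a / 4 := by
    rw [Real.rpow_sub h2, two_mul, Real.rpow_add h2]
    norm_num
    rfl
  have hden : d1 + 4 * d2 ≠ 0 := by positivity
  have hdet : H.det = -(d1 + d2) * d1 * d2 * (a * a / 4)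
      * (d2 / (d1 + 4 * d2) + c * a) := by
    subst hH
    simp only [Matrix.det_fin_three, Matrix.cons_val', Matrix.cons_val_zero,
      Matrix.cons_val_one, Matrix.head_cons, Matrix.head_fin_const,
      Matrix.cons_val_fin_one, Matrix.empty_val', Matrix.cons_val_two,
      Matrix.tail_cons, Matrix.of_apply]
    rw [h1, h2', ht]
    field_simp
    ring
  constructor
  · rw [hdet, h3]
  · intro hc
    rw [hdet]
    have hfac : 0 < d2 / (d1 + 4 * d2) + c * a := by positivity
    have : 0 < (d1 + d2) * d1 * d2 * (a * a / 4) * (d2 / (d1 + 4 * d2) + c * a) := by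
      positivity
    nlinarith
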